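/- arXiv:2110.01427 — 9 statements merged into one kernel-verified Lean document; each statement's English description precedes it below -/
import Mathlib

section
/- Suppose unconfoundedness holds at t = 0 (i.e. μ̄_0 = m_0). Then the conditional contrast of the observed outcome on the binarized indicator decomposes into a weighted average of treatment-specific conditional average effects plus a weighted average of treatment-specific selection effects: E[Y | A ∩ {D = 1}] − E[Y | A ∩ {D = 0}] = Σ_{t=1}^J (e_t / Σ_{s=1}^J e_s)·(m_t − m_0) + Σ_{t=1}^J (e_t / Σ_{s=1}^J e_s)·(μ̄_t − m_t). -/
open MeasureTheory ProbabilityTheory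

/-- Under unconfoundedness at `t = 0`, the conditional contrast of the
observed outcome on the binarized indicator decomposes into a weighted average of
treatment-specific conditional average effects plus a weighted average of
treatment-specific selection effects. -/
theorem binarized_contrast_decomposition_with_selection
    {Ω : Type*} [MeasurableSpace Ω] (P : Measure Ω) [IsProbabilityMeasure P]
    (J : ℕ) (hJ : 1 ≤ J)
    (T : Ω → ℕ) (hT : Measurable T) (hTle : ∀ ω, T ω ≤ J)
    (Y : ℕ → Ω → ℝ) (hYmeas : ∀ t, Measurable (Y t)) (hYint : ∀ t, Integrable (Y t) P)
    (A : Set Ω) (hA : MeasurableSet A)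
    (hpos : ∀ t ≤ J, 0 < P (A ∩ {ω | T ω = t}))
    (Yobs : Ω → ℝ)
    (hYobs : ∀ ω, Yobs ω = ∑ t ∈ Finset.range (J + 1), if T ω = t then Y t ω else 0)
    (e : ℕ → ℝ) (he : ∀ t, e t = ((P[|A]) {ω | T ω = t}).toReal)
    (m : ℕ → ℝ) (hm : ∀ t, m t = ∫ ω, Y t ω ∂(P[|A]))
    (μbar : ℕ → ℝ)
    (hμbar : ∀ t, μbar t = ∫ ω, Y t ω ∂(P[|(A ∩ {ω | T ω = t})]))
    (hunconf0 : μbar 0 = m 0) :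
    (∫ ω, Yobs ω ∂(P[|(A ∩ {ω | T ω ≠ 0})])) - (∫ ω, Yobs ω ∂(P[|(A ∩ {ω | T ω = 0})]))
      = (∑ t ∈ Finset.Icc 1 J, (e t / (∑ s ∈ Finset.Icc 1 J, e s)) * (m t - m 0))
        + (∑ t ∈ Finset.Icc 1 J, (e t / (∑ s ∈ Finset.Icc 1 J, e s)) * (μbar t - m t)) := by
  classical
  set S : ℕ → Set Ω := fun t => A ∩ {ω | T ω = t} with hS
  have hSmeas : ∀ t, MeasurableSet (S t) := fun t =>
    hA.inter (hT (measurableSet_singleton t))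
  set B : Set Ω := A ∩ {ω | T ω ≠ 0} with hBdef
  -- B is the disjoint union of the S t, t ∈ Icc 1 J
  have hB : B = ⋃ t ∈ Finset.Icc 1 J, S t := by
    ext ω
    simp only [hBdef, hS, Set.mem_inter_iff, Set.mem_setOf_eq, Set.mem_iUnion,
      Finset.mem_Icc]
    constructor
    · rintro ⟨hωA, hω0⟩
      exact ⟨T ω, ⟨Nat.one_le_iff_ne_zero.mpr hω0, hTle ω⟩, hωA, rfl⟩
    · rintro ⟨t, ⟨ht1, _⟩, hωA, hωt⟩
      exact ⟨hωA, by omega⟩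
  have hdisj : (↑(Finset.Icc 1 J) : Set ℕ).Pairwise (Function.onFun Disjoint S) := by
    intro i _ j _ hij
    apply Set.disjoint_left.mpr
    rintro ω ⟨_, hi⟩ ⟨_, hj⟩
    exact hij (hi.symm.trans hj)
  -- Yobs equals Y t on S t
  have hYobsS : ∀ t ≤ J, ∀ ω ∈ S t, Yobs ω = Y t ω := by
    intro t ht ω hω
    have hωt : T ω = t := hω.2
    rw [hYobs, Finset.sum_eq_single t]
    · simp [hωt]
    · intro b _ hb
      rw [if_neg]
      omega
    · intro h
      exact absurd (Finset.mem_range.mpr (Nat.lt_succ_of_le ht)) h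
  -- Integrability of Yobs
  have hYobsInt : Integrable Yobs P := by
    have heq : Yobs = fun ω => ∑ t ∈ Finset.range (J + 1),
        ({ω | T ω = t}).indicator (Y t) ω := by
      funext ω
      rw [hYobs]
      refine Finset.sum_congr rfl fun t _ => ?_
      simp [Set.indicator_apply, Set.mem_setOf_eq]
    rw [heq]
    exact integrable_finset_sum _ fun t _ =>
      (hYint t).indicator (hT (measurableSet_singleton t))
  -- integral against a conditional measure
  have hcondint : ∀ (C : Set Ω) (f : Ω → ℝ),
      (∫ ω, f ω ∂(P[|C])) = (P C).toReal⁻¹ * ∫ ω in C, f ω ∂P := by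
    intro C f
    rw [ProbabilityTheory.cond, integral_smul_measure, ENNReal.toReal_inv,
      smul_eq_mul]
  -- real-valued quantities
  set p : ℕ → ℝ := fun t => (P (S t)).toReal with hp
  have hpfin : ∀ t, P (S t) ≠ ⊤ := fun t => measure_ne_top P (S t)
  have hppos : ∀ t ≤ J, 0 < p t := fun t ht =>
    ENNReal.toReal_pos (hpos t ht).ne' (hpfin t)
  set I : ℕ → ℝ := fun t => ∫ ω in S t, Y t ω ∂P with hI
  have hμbar' : ∀ t, μbar t = (p t)⁻¹ * I t := fun t => by
    rw [hμbar t, hcondint]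
  have haApos : (0 : ℝ) < (P A).toReal := by
    refine ENNReal.toReal_pos ?_ (measure_ne_top P A)
    intro h
    have hle : P (S 0) ≤ P A := measure_mono Set.inter_subset_left
    rw [h] at hle
    exact (hpos 0 (by omega)).ne' (le_antisymm hle zero_le)
  set aA : ℝ := (P A).toReal with haA
  -- e t in terms of p t
  have he' : ∀ t, e t = aA⁻¹ * p t := fun t => by
    rw [he t, cond_apply hA, ENNReal.toReal_mul, ENNReal.toReal_inv]
  -- P B and p over the union
  have hPB : (P B).toReal = ∑ t ∈ Finset.Icc 1 J, p t := by
    rw [hB, measure_biUnion_finset hdisj fun t _ => hSmeas t, ENNReal.toReal_sum]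
    intro t _
    exact hpfin t
  set pB : ℝ := ∑ t ∈ Finset.Icc 1 J, p t with hpB
  have hpBpos : 0 < pB := by
    have : (0:ℝ) < p 1 := hppos 1 hJ
    refine Finset.sum_pos' (fun t ht => (hppos t (Finset.mem_Icc.mp ht).2).le) ?_
    exact ⟨1, Finset.mem_Icc.mpr ⟨le_refl 1, hJ⟩, this⟩
  -- sum of e's
  have hesum : (∑ s ∈ Finset.Icc 1 J, e s) = aA⁻¹ * pB := by
    rw [hpB, Finset.mul_sum]
    exact Finset.sum_congr rfl fun s _ => he' s
  -- integral of Yobs over B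
  have hIntB : (∫ ω, Yobs ω ∂(P[|B])) = pB⁻¹ * ∑ t ∈ Finset.Icc 1 J, I t := by
    rw [hcondint, hPB, hB,
      integral_biUnion_finset _ (fun t _ => hSmeas t) hdisj
        (fun t _ => hYobsInt.integrableOn)]
    congr 1
    refine Finset.sum_congr rfl fun t ht => ?_
    exact setIntegral_congr_fun (hSmeas t)
      (hYobsS t (Finset.mem_Icc.mp ht).2)
  -- integral of Yobs over S 0
  have hInt0 : (∫ ω, Yobs ω ∂(P[|S 0])) = m 0 := by
    rw [hcondint]
    have : (∫ ω in S 0, Yobs ω ∂P) = I 0 :=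
      setIntegral_congr_fun (hSmeas 0) (hYobsS 0 (by omega))
    rw [this, ← hμbar' 0, hunconf0]
  -- put it together
  have hLHS : (∫ ω, Yobs ω ∂(P[|(A ∩ {ω | T ω ≠ 0})]))
      - (∫ ω, Yobs ω ∂(P[|(A ∩ {ω | T ω = 0})]))
      = pB⁻¹ * (∑ t ∈ Finset.Icc 1 J, I t) - m 0 := by
    rw [← hBdef] at *
    rw [hIntB]
    have : (A ∩ {ω | T ω = 0}) = S 0 := rfl
    rw [this, hInt0]
  rw [hLHS, hesum, ← Finset.sum_add_distrib]
  have haAne : aA ≠ 0 := ne_of_gt haApos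
  have hpBne : pB ≠ 0 := ne_of_gt hpBpos
  have hterm : ∀ t ∈ Finset.Icc 1 J,
      (e t / (aA⁻¹ * pB)) * (m t - m 0) + (e t / (aA⁻¹ * pB)) * (μbar t - m t)
      = pB⁻¹ * I t - (p t / pB) * m 0 := by
    intro t ht
    have htJ : t ≤ J := (Finset.mem_Icc.mp ht).2
    have hptne : p t ≠ 0 := ne_of_gt (hppos t htJ)
    rw [he' t, hμbar' t]
    field_simp
    ring
  rw [Finset.sum_congr rfl hterm, Finset.sum_sub_distrib, ← Finset.mul_sum,
    ← Finset.sum_mul, ← Finset.sum_div, ← hpB, div_self hpBne, one_mul]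
end

section
/- Suppose unconfoundedness holds at every t ∈ {0,…,J} (i.e. μ̄_t = m_t for all t). Then the conditional contrast of the observed outcome on the binarized indicator identifies the natural conditional average treatment effect: E[Y | A ∩ {D = 1}] − E[Y | A ∩ {D = 0}] = Σ_{t=1}^J (e_t / Σ_{s=1}^J e_s)·(m_t − m_0). -/
open MeasureTheory ProbabilityTheory

/-- Under unconfoundedness at every `t ∈ {0,…,J}`, the conditional contrast
of the observed outcome on the binarized indicator identifies the natural conditional
average treatment effect. -/
theorem binarized_contrast_identifies_nATE
    {Ω : Type*} [MeasurableSpace Ω] (P : Measure Ω) [IsProbabilityMeasure P]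
    (J : ℕ) (hJ : 1 ≤ J)
    (T : Ω → ℕ) (hT : Measurable T) (hTle : ∀ ω, T ω ≤ J)
    (Y : ℕ → Ω → ℝ) (hYmeas : ∀ t, Measurable (Y t)) (hYint : ∀ t, Integrable (Y t) P)
    (A : Set Ω) (hA : MeasurableSet A)
    (hpos : ∀ t ≤ J, 0 < P (A ∩ {ω | T ω = t}))
    (Yobs : Ω → ℝ)
    (hYobs : ∀ ω, Yobs ω = ∑ t ∈ Finset.range (J + 1), if T ω = t then Y t ω else 0)
    (e : ℕ → ℝ) (he : ∀ t, e t = ((P[|A]) {ω | T ω = t}).toReal)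
    (m : ℕ → ℝ) (hm : ∀ t, m t = ∫ ω, Y t ω ∂(P[|A]))
    (μbar : ℕ → ℝ)
    (hμbar : ∀ t, μbar t = ∫ ω, Y t ω ∂(P[|(A ∩ {ω | T ω = t})]))
    (hunconf : ∀ t ≤ J, μbar t = m t) :
    (∫ ω, Yobs ω ∂(P[|(A ∩ {ω | T ω ≠ 0})])) - (∫ ω, Yobs ω ∂(P[|(A ∩ {ω | T ω = 0})]))
      = ∑ t ∈ Finset.Icc 1 J, (e t / (∑ s ∈ Finset.Icc 1 J, e s)) * (m t - m 0) := by
  classical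
  set At : ℕ → Set Ω := fun t => A ∩ {ω | T ω = t} with hAtdef
  set B : Set Ω := A ∩ {ω | T ω ≠ 0} with hBdef
  have hAtm : ∀ t, MeasurableSet (At t) := fun t => hA.inter (hT (measurableSet_singleton t))
  have hBunion : B = ⋃ t ∈ Finset.Icc 1 J, At t := by
    ext ω
    simp only [hBdef, hAtdef, Set.mem_iUnion, Finset.mem_Icc, Set.mem_inter_iff,
      Set.mem_setOf_eq]
    constructor
    · rintro ⟨hωA, hT0⟩
      exact ⟨T ω, ⟨Nat.one_le_iff_ne_zero.mpr hT0, hTle ω⟩, hωA, rfl⟩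
    · rintro ⟨t, ⟨h1, _⟩, hωA, ht⟩
      exact ⟨hωA, by omega⟩
  have hdisj : (↑(Finset.Icc 1 J) : Set ℕ).Pairwise (Function.onFun Disjoint At) := by
    intro s _ t _ hst
    simp only [Function.onFun, Set.disjoint_left]
    rintro ω ⟨_, hs⟩ ⟨_, ht⟩
    exact hst (hs.symm.trans ht)
  have hPB : P B = ∑ t ∈ Finset.Icc 1 J, P (At t) := by
    rw [hBunion, measure_biUnion_finset hdisj (fun t _ => hAtm t)]
  -- real-valued masses
  set r : ℕ → ℝ := fun t => (P (At t)).toReal with hrdef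
  have hr_pos : ∀ t ≤ J, 0 < r t := fun t ht =>
    ENNReal.toReal_pos (hpos t ht).ne' (measure_ne_top P _)
  have hrB : (P B).toReal = ∑ t ∈ Finset.Icc 1 J, r t := by
    rw [hPB, ENNReal.toReal_sum (fun t _ => measure_ne_top P _)]
  have hPB_pos : 0 < (P B).toReal := by
    rw [hrB]
    refine Finset.sum_pos (fun t ht => hr_pos t (Finset.mem_Icc.mp ht).2) ?_
    exact Finset.nonempty_Icc.mpr hJ
  -- Yobs equals Y t on At t
  have hYobs_eq : ∀ t ≤ J, ∀ ω ∈ At t, Yobs ω = Y t ω := by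
    intro t ht ω hω
    have hTt : T ω = t := hω.2
    rw [hYobs]
    rw [Finset.sum_eq_single t]
    · simp [hTt]
    · intro s _ hst
      rw [if_neg]
      intro h; exact hst (h.symm.trans hTt)
    · intro h; exact absurd (Finset.mem_range.mpr (by omega)) h
  have hYobsInt : Integrable Yobs P := by
    have : Yobs = fun ω => ∑ t ∈ Finset.range (J+1), ({ω | T ω = t}).indicator (Y t) ω := by
      funext ω; rw [hYobs]
      exact Finset.sum_congr rfl fun t _ => by
        simp [Set.indicator_apply, Set.mem_setOf_eq]
    rw [this]
    exact integrable_finset_sum _ fun t _ =>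
      (hYint t).indicator (hT (measurableSet_singleton t))
  -- key per-t set integral
  have hkey : ∀ t ≤ J, ∫ ω in At t, Yobs ω ∂P = r t * m t := by
    intro t ht
    have h1 : ∫ ω in At t, Yobs ω ∂P = ∫ ω in At t, Y t ω ∂P :=
      setIntegral_congr_fun (hAtm t) (fun ω hω => hYobs_eq t ht ω hω)
    have h2 : μbar t = (r t)⁻¹ * ∫ ω in At t, Y t ω ∂P := by
      rw [hμbar t, ProbabilityTheory.cond, integral_smul_measure, ENNReal.toReal_inv,
        smul_eq_mul]
    have h3 : ∫ ω in At t, Y t ω ∂P = r t * μbar t := by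
      rw [h2, ← mul_assoc, mul_inv_cancel₀ (hr_pos t ht).ne', one_mul]
    rw [h1, h3, hunconf t ht]
  -- second term of LHS
  have hL0 : (∫ ω, Yobs ω ∂(P[|(At 0)])) = m 0 := by
    rw [ProbabilityTheory.cond, integral_smul_measure, hkey 0 (by omega), ENNReal.toReal_inv,
      smul_eq_mul, ← mul_assoc, inv_mul_cancel₀ (hr_pos 0 (by omega)).ne', one_mul]
  -- first term of LHS
  have hL1 : (∫ ω, Yobs ω ∂(P[|B])) =
      ((P B).toReal)⁻¹ * ∑ t ∈ Finset.Icc 1 J, r t * m t := by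
    rw [ProbabilityTheory.cond, integral_smul_measure, ENNReal.toReal_inv, smul_eq_mul]
    congr 1
    rw [hBunion, integral_biUnion_finset _ (fun t _ => hAtm t) hdisj
      (fun t _ => hYobsInt.integrableOn)]
    exact Finset.sum_congr rfl fun t htmem => hkey t (Finset.mem_Icc.mp htmem).2
  -- e in terms of r
  have hPA_pos : 0 < (P A).toReal := by
    refine ENNReal.toReal_pos ?_ (measure_ne_top P _)
    intro h
    exact absurd (measure_mono_null (Set.inter_subset_left) h) (hpos 0 (by omega)).ne'
  have he' : ∀ t, e t = ((P A).toReal)⁻¹ * r t := by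
    intro t
    rw [he t, ProbabilityTheory.cond_apply hA, ENNReal.toReal_mul, ENNReal.toReal_inv]
  have hesum : ∑ s ∈ Finset.Icc 1 J, e s = ((P A).toReal)⁻¹ * (P B).toReal := by
    rw [hrB, Finset.mul_sum]
    exact Finset.sum_congr rfl fun t _ => he' t
  -- final arithmetic
  rw [hL1, hL0, hesum]
  have hediv : ∀ t, e t / (((P A).toReal)⁻¹ * (P B).toReal) = r t / (P B).toReal := by
    intro t
    rw [he' t, mul_div_mul_left _ _ (inv_ne_zero hPA_pos.ne')]
  have hRHS : (∑ t ∈ Finset.Icc 1 J, (e t / ((P A).toReal⁻¹ * (P B).toReal)) * (m t - m 0))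
      = (P B).toReal⁻¹ * (∑ t ∈ Finset.Icc 1 J, r t * m t) - m 0 := by
    have step : ∀ t ∈ Finset.Icc 1 J,
        (e t / ((P A).toReal⁻¹ * (P B).toReal)) * (m t - m 0)
          = (P B).toReal⁻¹ * (r t * m t) - (P B).toReal⁻¹ * (r t * m 0) := by
      intro t _; rw [hediv t]; ring
    rw [Finset.sum_congr rfl step, Finset.sum_sub_distrib, ← Finset.mul_sum, ← Finset.mul_sum,
      ← Finset.sum_mul, ← hrB, ← mul_assoc, inv_mul_cancel₀ hPB_pos.ne', one_mul]
  rw [hRHS]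
end

section
/- Suppose unconfoundedness holds at every t ∈ {0,…,J}, and let π_1,…,π_J be positive reals. Then the conditional contrast τ := E[Y | A ∩ {D = 1}] − E[Y | A ∩ {D = 0}] decomposes exactly as τ = rATE + Δ, where rATE := Σ_{t=1}^J (π_t / Σ_{s=1}^J π_s)·(m_t − m_0) and Δ := Σ_{t=1}^J ( e_t / Σ_{s=1}^J e_s − π_t / Σ_{s=1}^J π_s )·(m_t − m_0). -/
open MeasureTheory ProbabilityTheory

/-- Under unconfoundedness at every `t ∈ {0,…,J}`, and for positive weights
`π_1,…,π_J`, the conditional contrast `τ = E[Y | A ∩ {D=1}] − E[Y | A ∩ {D=0}]`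
decomposes exactly as `τ = rATE + Δ`. -/
theorem contrast_decomposes_into_rATE_plus_Delta
    {Ω : Type*} [MeasurableSpace Ω] (P : Measure Ω) [IsProbabilityMeasure P]
    (J : ℕ) (hJ : 1 ≤ J)
    (T : Ω → ℕ) (hT : Measurable T) (hTle : ∀ ω, T ω ≤ J)
    (Y : ℕ → Ω → ℝ) (hYmeas : ∀ t, Measurable (Y t)) (hYint : ∀ t, Integrable (Y t) P)
    (A : Set Ω) (hA : MeasurableSet A)
    (hpos : ∀ t ≤ J, 0 < P (A ∩ {ω | T ω = t}))
    (Yobs : Ω → ℝ)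
    (hYobs : ∀ ω, Yobs ω = ∑ t ∈ Finset.range (J + 1), if T ω = t then Y t ω else 0)
    (e : ℕ → ℝ) (he : ∀ t, e t = ((P[|A]) {ω | T ω = t}).toReal)
    (m : ℕ → ℝ) (hm : ∀ t, m t = ∫ ω, Y t ω ∂(P[|A]))
    (μbar : ℕ → ℝ)
    (hμbar : ∀ t, μbar t = ∫ ω, Y t ω ∂(P[|(A ∩ {ω | T ω = t})]))
    (hunconf : ∀ t ≤ J, μbar t = m t)
    (πv : ℕ → ℝ) (hπpos : ∀ t ∈ Finset.Icc 1 J, 0 < πv t) :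
    (∫ ω, Yobs ω ∂(P[|(A ∩ {ω | T ω ≠ 0})])) - (∫ ω, Yobs ω ∂(P[|(A ∩ {ω | T ω = 0})]))
      = (∑ t ∈ Finset.Icc 1 J, (πv t / (∑ s ∈ Finset.Icc 1 J, πv s)) * (m t - m 0))
        + (∑ t ∈ Finset.Icc 1 J,
            (e t / (∑ s ∈ Finset.Icc 1 J, e s) - πv t / (∑ s ∈ Finset.Icc 1 J, πv s))
              * (m t - m 0)) := by
  classical
  -- basic sets
  set St : ℕ → Set Ω := fun t => {ω | T ω = t} with hSt
  have hStm : ∀ t, MeasurableSet (St t) := fun t => hT (measurableSet_singleton t)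
  set D : Set Ω := {ω | T ω ≠ 0} with hDdef
  have hDm : MeasurableSet D := (hStm 0).compl
  -- Yobs pointwise
  have hYobs' : ∀ ω, Yobs ω = Y (T ω) ω := by
    intro ω
    rw [hYobs ω, Finset.sum_ite_eq]
    simp [Nat.lt_succ_iff, hTle ω]
  -- real-valued basic quantities
  set a : ℕ → ℝ := fun t => (P (A ∩ St t)).toReal with ha_def
  set I : ℕ → ℝ := fun t => ∫ ω in A ∩ St t, Y t ω ∂P with hI_def
  have hfin : ∀ s : Set Ω, P s ≠ ⊤ := fun s => measure_ne_top P s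
  have ha_pos : ∀ t ≤ J, 0 < a t := fun t ht =>
    ENNReal.toReal_pos (hpos t ht).ne' (hfin _)
  set pA : ℝ := (P A).toReal with hpA_def
  have hpA_pos : 0 < pA := by
    have h0 : 0 < P A := lt_of_lt_of_le (hpos 0 (Nat.zero_le J)) (measure_mono Set.inter_subset_left)
    exact ENNReal.toReal_pos h0.ne' (hfin _)
  set pD : ℝ := (P (A ∩ D)).toReal with hpD_def
  -- cond integral formula
  have hcond_int : ∀ (s : Set Ω) (f : Ω → ℝ),
      (∫ ω, f ω ∂(P[|s])) = ((P s).toReal)⁻¹ * ∫ ω in s, f ω ∂P := by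
    intro s f
    rw [ProbabilityTheory.cond, integral_smul_measure, smul_eq_mul, ENNReal.toReal_inv]
  -- μbar and m formulas
  have hμbar' : ∀ t, μbar t = (a t)⁻¹ * I t := fun t => by
    rw [hμbar t, hcond_int]
  have hm' : ∀ t, m t = pA⁻¹ * ∫ ω in A, Y t ω ∂P := fun t => by
    rw [hm t, hcond_int]
  have hI : ∀ t ≤ J, I t = a t * m t := by
    intro t ht
    have h := (hμbar' t).symm.trans (hunconf t ht)
    have hat := (ha_pos t ht).ne'
    field_simp at h
    linarith [h]
  -- e formula
  have he' : ∀ t, e t = a t / pA := by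
    intro t
    rw [he t, cond_apply hA]
    rw [ENNReal.toReal_mul, ENNReal.toReal_inv]
    ring
  -- A ∩ D as disjoint union
  have hunion : A ∩ D = ⋃ t ∈ Finset.Icc 1 J, A ∩ St t := by
    ext ω
    simp only [Set.mem_inter_iff, Set.mem_iUnion, Finset.mem_Icc, hDdef, hSt,
      Set.mem_setOf_eq]
    constructor
    · rintro ⟨hω, hne⟩
      exact ⟨T ω, ⟨Nat.one_le_iff_ne_zero.mpr hne, hTle ω⟩, hω, rfl⟩
    · rintro ⟨t, ⟨h1, _⟩, hω, hte⟩
      exact ⟨hω, by omega⟩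
  have hdisj : Set.Pairwise (↑(Finset.Icc 1 J)) (Function.onFun Disjoint (fun t => A ∩ St t)) := by
    intro s _ t _ hst
    apply Set.disjoint_left.mpr
    rintro ω ⟨_, hs⟩ ⟨_, ht⟩
    exact hst (hs.symm.trans ht)
  have hmeas' : ∀ t ∈ Finset.Icc 1 J, MeasurableSet (A ∩ St t) := fun t _ => hA.inter (hStm t)
  -- pD = Σ a t
  have hpD_sum : pD = ∑ t ∈ Finset.Icc 1 J, a t := by
    rw [hpD_def, hunion, measure_biUnion_finset hdisj hmeas', ENNReal.toReal_sum
      (fun t _ => hfin _)]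
  have hpD_pos : 0 < pD := by
    rw [hpD_sum]
    refine Finset.sum_pos (fun t ht => ha_pos t (Finset.mem_Icc.mp ht).2) ?_
    exact ⟨1, Finset.mem_Icc.mpr ⟨le_refl 1, hJ⟩⟩
  -- integrability of Yobs on pieces, and value of set integrals of Yobs
  have hYobs_set : ∀ t, (∫ ω in A ∩ St t, Yobs ω ∂P) = I t := by
    intro t
    refine setIntegral_congr_fun (hA.inter (hStm t)) ?_
    intro ω hω
    rw [hYobs' ω]
    have : T ω = t := hω.2
    rw [this]
  have hYobs_intOn : ∀ t, IntegrableOn Yobs (A ∩ St t) P := by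
    intro t
    refine ((hYint t).integrableOn).congr_fun ?_ (hA.inter (hStm t))
    intro ω hω
    have : T ω = t := hω.2
    rw [hYobs' ω, this]
  -- first term
  have hterm1 : (∫ ω, Yobs ω ∂(P[|(A ∩ D)])) = pD⁻¹ * ∑ t ∈ Finset.Icc 1 J, a t * m t := by
    rw [hcond_int, ← hpD_def, hunion,
      integral_biUnion_finset _ hmeas' hdisj (fun t _ => hYobs_intOn t)]
    congr 1
    refine Finset.sum_congr rfl (fun t ht => ?_)
    rw [hYobs_set t, hI t (Finset.mem_Icc.mp ht).2]
  -- second term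
  have hterm2 : (∫ ω, Yobs ω ∂(P[|(A ∩ St 0)])) = m 0 := by
    rw [hcond_int, hYobs_set 0]
    exact (hμbar' 0).symm.trans (hunconf 0 (Nat.zero_le J))
  -- sum of e
  have hesum : ∑ s ∈ Finset.Icc 1 J, e s = pD / pA := by
    rw [hpD_sum, Finset.sum_div]
    exact Finset.sum_congr rfl (fun t _ => he' t)
  -- RHS simplification: the πv-parts cancel
  have hπsum_pos : 0 < ∑ s ∈ Finset.Icc 1 J, πv s := by
    refine Finset.sum_pos hπpos ⟨1, Finset.mem_Icc.mpr ⟨le_refl 1, hJ⟩⟩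
  have hRHS : (∑ t ∈ Finset.Icc 1 J, (πv t / (∑ s ∈ Finset.Icc 1 J, πv s)) * (m t - m 0))
        + (∑ t ∈ Finset.Icc 1 J,
            (e t / (∑ s ∈ Finset.Icc 1 J, e s) - πv t / (∑ s ∈ Finset.Icc 1 J, πv s))
              * (m t - m 0))
      = ∑ t ∈ Finset.Icc 1 J, (a t / pD) * (m t - m 0) := by
    rw [← Finset.sum_add_distrib]
    refine Finset.sum_congr rfl (fun t ht => ?_)
    rw [he' t, hesum]
    have h1 : a t / pA / (pD / pA) = a t / pD := by
      field_simp
    rw [h1]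
    ring
  rw [hRHS, hterm1, hterm2]
  rw [Finset.sum_congr rfl (fun t (_ : t ∈ Finset.Icc 1 J) =>
    (by ring : (a t / pD) * (m t - m 0) = pD⁻¹ * (a t * m t) - (a t / pD) * m 0))]
  rw [Finset.sum_sub_distrib, ← Finset.mul_sum, ← Finset.sum_mul, ← Finset.sum_div, ← hpD_sum]
  have : pD / pD = 1 := div_self hpD_pos.ne'
  rw [this, one_mul]
end

section
/- Conditional unbiasedness of the augmented inverse probability weighting (AIPW) score, doubly robust in the outcome plug-in: fix t ∈ {0,…,J}, suppose unconfoundedness holds at t, and let c be any real number. Then E[ c + 1{T = t}·(Y − c)/e_t | A ] = E[Y_t | A] (note e_t > 0 by assumption). -/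
open MeasureTheory ProbabilityTheory

/-- Conditional unbiasedness of the AIPW score, doubly robust in the
outcome plug-in: for any real `c`, `E[c + 1{T=t}·(Y − c)/e_t | A] = E[Y_t | A]`,
under unconfoundedness at `t`. -/
theorem aipw_score_conditionally_unbiased
    {Ω : Type*} [MeasurableSpace Ω] (P : Measure Ω) [IsProbabilityMeasure P]
    (J : ℕ) (hJ : 1 ≤ J)
    (T : Ω → ℕ) (hT : Measurable T) (hTle : ∀ ω, T ω ≤ J)
    (Y : ℕ → Ω → ℝ) (hYmeas : ∀ t, Measurable (Y t)) (hYint : ∀ t, Integrable (Y t) P)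
    (A : Set Ω) (hA : MeasurableSet A)
    (hpos : ∀ t ≤ J, 0 < P (A ∩ {ω | T ω = t}))
    (Yobs : Ω → ℝ)
    (hYobs : ∀ ω, Yobs ω = ∑ t ∈ Finset.range (J + 1), if T ω = t then Y t ω else 0)
    (e : ℕ → ℝ) (he : ∀ t, e t = ((P[|A]) {ω | T ω = t}).toReal)
    (m : ℕ → ℝ) (hm : ∀ t, m t = ∫ ω, Y t ω ∂(P[|A]))
    (μbar : ℕ → ℝ)
    (hμbar : ∀ t, μbar t = ∫ ω, Y t ω ∂(P[|(A ∩ {ω | T ω = t})]))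
    (t : ℕ) (ht : t ≤ J)
    (hunconf : μbar t = m t)
    (c : ℝ) :
    ∫ ω, (c + (if T ω = t then (1 : ℝ) else 0) * (Yobs ω - c) / e t) ∂(P[|A])
      = ∫ ω, Y t ω ∂(P[|A]) := by
  set S : Set Ω := {ω | T ω = t} with hS
  have hSmeas : MeasurableSet S := hT (measurableSet_singleton t)
  have hASpos : 0 < P (A ∩ S) := hpos t ht
  have hASne : P (A ∩ S) ≠ 0 := hASpos.ne'
  have hASnetop : P (A ∩ S) ≠ ⊤ := measure_ne_top _ _
  have hPAne : P A ≠ 0 := fun h => hASne (le_antisymm (h ▸ measure_mono Set.inter_subset_left) zero_le)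
  have hPAnetop : P A ≠ ⊤ := measure_ne_top _ _
  have hinvne : (P A)⁻¹ ≠ ⊤ := by simpa [ENNReal.inv_eq_top] using hPAne
  -- Yobs equals Y (T ω) ω
  have hYobs' : ∀ ω, T ω = t → Yobs ω = Y t ω := by
    intro ω hω
    rw [hYobs ω]
    rw [Finset.sum_eq_single t]
    · simp [hω]
    · intro b _ hb; rw [hω]; simp [hb, Ne.symm]
    · intro hmem; exact absurd (Finset.mem_range.2 (Nat.lt_succ_of_le ht)) hmem
  -- the value of e t
  have het : e t = ((P A)⁻¹ * P (A ∩ S)).toReal := by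
    rw [he t, cond_apply hA]
  have hetpos : 0 < e t := by
    rw [het]
    apply ENNReal.toReal_pos
    · exact mul_ne_zero (by simpa [ENNReal.inv_eq_zero] using hPAnetop) hASne
    · exact ENNReal.mul_ne_top hinvne hASnetop
  -- integrability
  have hYintc : Integrable (Y t) (P[|A]) := by
    rw [ProbabilityTheory.cond]
    exact ((hYint t).restrict).smul_measure hinvne
  have hgint : Integrable (fun ω => (Y t ω - c) / e t) (P[|A]) :=
    ((hYintc.sub (integrable_const c)).div_const _)
  -- restrict of cond
  have hrestr : (P[|A]).restrict S = (P A)⁻¹ • P.restrict (A ∩ S) := by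
    rw [ProbabilityTheory.cond, Measure.restrict_smul, Measure.restrict_restrict hSmeas, Set.inter_comm]
  -- key: set integral of Y t over S wrt P[|A]
  have hkey : ∫ ω in S, Y t ω ∂(P[|A]) = μbar t * e t := by
    have h1 : ∫ ω in S, Y t ω ∂(P[|A]) = (P A)⁻¹.toReal * ∫ ω in A ∩ S, Y t ω ∂P := by
      rw [hrestr, integral_smul_measure]; rfl
    have h2 : μbar t = (P (A ∩ S))⁻¹.toReal * ∫ ω in A ∩ S, Y t ω ∂P := by
      rw [hμbar t, ProbabilityTheory.cond, integral_smul_measure]; rfl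
    rw [h1, h2, het]
    rw [ENNReal.toReal_mul, ENNReal.toReal_inv, ENNReal.toReal_inv]
    have hASr : (P (A ∩ S)).toReal ≠ 0 :=
      (ENNReal.toReal_pos hASne hASnetop).ne'
    field_simp
  -- measure of S under cond
  have hmuS : ((P[|A]) S).toReal = e t := (he t).symm
  -- rewrite the integrand as c + indicator
  have hfun : (fun ω => c + (if T ω = t then (1 : ℝ) else 0) * (Yobs ω - c) / e t)
      = fun ω => c + S.indicator (fun ω => (Y t ω - c) / e t) ω := by
    funext ω
    by_cases hω : T ω = t
    · have : ω ∈ S := hω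
      simp [Set.indicator_of_mem this, hYobs' ω hω, hω, mul_comm, mul_div_assoc]
    · have : ω ∉ S := hω
      simp [Set.indicator_of_notMem this, hω]
  rw [hfun]
  have hindint : Integrable (S.indicator fun ω => (Y t ω - c) / e t) (P[|A]) :=
    hgint.indicator hSmeas
  have : IsProbabilityMeasure (P[|A]) := cond_isProbabilityMeasure hPAne
  rw [integral_add (integrable_const c) hindint, integral_indicator hSmeas,
    integral_const]
  have hsplit : ∫ ω in S, (Y t ω - c) / e t ∂(P[|A])
      = ((∫ ω in S, Y t ω ∂(P[|A])) - c * ((P[|A]) S).toReal) / e t := by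
    rw [integral_div, integral_sub (hYintc.restrict) (integrable_const c),
      setIntegral_const]
    simp only [smul_eq_mul, measureReal_def]
    ring
  rw [hsplit, hkey, hmuS]
  have : m t = ∫ ω, Y t ω ∂(P[|A]) := hm t
  rw [← this, ← hunconf]
  field_simp
  simp [measureReal_def]
end

section
/- Conditional unbiasedness of the aggregate AIPW score for the treated group: suppose unconfoundedness holds at every t ∈ {1,…,J}, let ē := Σ_{t=1}^J e_t (so ē = P({D = 1} | A) > 0), and let c be any real number. Then E[ c + D·(Y − c)/ē | A ] = Σ_{t=1}^J e_t·m_t / ē. -/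
open MeasureTheory ProbabilityTheory

lemma cond_integral_indicator {Ω : Type*} [MeasurableSpace Ω] (P : Measure Ω)
    [IsFiniteMeasure P] {A s : Set Ω} (hs : MeasurableSet s)
    (hne : P (A ∩ s) ≠ 0) (f : Ω → ℝ) :
    ∫ ω, s.indicator f ω ∂(P[|A]) = ((P[|A]) s).toReal * ∫ ω, f ω ∂(P[|(A ∩ s)]) := by
  have hb : (P (A ∩ s)).toReal ≠ 0 :=
    ENNReal.toReal_ne_zero.2 ⟨hne, measure_ne_top _ _⟩
  rw [ProbabilityTheory.cond, ProbabilityTheory.cond, integral_smul_measure,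
    integral_smul_measure, integral_indicator hs, Measure.restrict_restrict hs,
    Set.inter_comm s A, Measure.smul_apply, Measure.restrict_apply hs, Set.inter_comm s A]
  simp only [smul_eq_mul, ENNReal.toReal_mul, ENNReal.toReal_inv]
  field_simp

/-- Conditional unbiasedness of the aggregate AIPW score for the treated
group: `E[c + D·(Y − c)/ē | A] = Σ_{t=1}^J e_t·m_t / ē`, where `ē = Σ_{t=1}^J e_t`,
under unconfoundedness at every `t ∈ {1,…,J}`. -/
theorem aggregate_aipw_score_conditionally_unbiased
    {Ω : Type*} [MeasurableSpace Ω] (P : Measure Ω) [IsProbabilityMeasure P]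
    (J : ℕ) (hJ : 1 ≤ J)
    (T : Ω → ℕ) (hT : Measurable T) (hTle : ∀ ω, T ω ≤ J)
    (Y : ℕ → Ω → ℝ) (hYmeas : ∀ t, Measurable (Y t)) (hYint : ∀ t, Integrable (Y t) P)
    (A : Set Ω) (hA : MeasurableSet A)
    (hpos : ∀ t ≤ J, 0 < P (A ∩ {ω | T ω = t}))
    (Yobs : Ω → ℝ)
    (hYobs : ∀ ω, Yobs ω = ∑ t ∈ Finset.range (J + 1), if T ω = t then Y t ω else 0)
    (e : ℕ → ℝ) (he : ∀ t, e t = ((P[|A]) {ω | T ω = t}).toReal)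
    (m : ℕ → ℝ) (hm : ∀ t, m t = ∫ ω, Y t ω ∂(P[|A]))
    (μbar : ℕ → ℝ)
    (hμbar : ∀ t, μbar t = ∫ ω, Y t ω ∂(P[|(A ∩ {ω | T ω = t})]))
    (hunconf : ∀ t, 1 ≤ t → t ≤ J → μbar t = m t)
    (ebar : ℝ) (hebar : ebar = ∑ t ∈ Finset.Icc 1 J, e t)
    (c : ℝ) :
    ∫ ω, (c + (if T ω ≠ 0 then (1 : ℝ) else 0) * (Yobs ω - c) / ebar) ∂(P[|A])
      = (∑ t ∈ Finset.Icc 1 J, e t * m t) / ebar := by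
  -- basic facts
  have hs : ∀ t : ℕ, MeasurableSet {ω | T ω = t} := fun t =>
    hT (measurableSet_singleton t)
  have hne : ∀ t ≤ J, P (A ∩ {ω | T ω = t}) ≠ 0 := fun t ht => (hpos t ht).ne'
  have hPA : P A ≠ 0 := by
    intro h
    exact hne 0 (Nat.zero_le J) (le_antisymm (h ▸ measure_mono Set.inter_subset_left)
      (zero_le))
  have hPAinv : (P A)⁻¹ ≠ ⊤ := ENNReal.inv_ne_top.2 hPA
  haveI : IsProbabilityMeasure (P[|A]) := cond_isProbabilityMeasure hPA
  -- e t is positive for 1 ≤ t ≤ J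
  have hepos : ∀ t ∈ Finset.Icc 1 J, 0 < e t := by
    intro t ht
    rw [Finset.mem_Icc] at ht
    rw [he, ProbabilityTheory.cond_apply hA]
    have h1 : (P A)⁻¹ ≠ 0 := by simpa using (measure_ne_top P A)
    exact ENNReal.toReal_pos (mul_ne_zero h1 (hne t ht.2))
      (ENNReal.mul_ne_top hPAinv (measure_ne_top _ _))
  have hebar_pos : 0 < ebar := by
    rw [hebar]
    exact Finset.sum_pos hepos ⟨1, Finset.mem_Icc.2 ⟨le_refl 1, hJ⟩⟩
  have hebar_ne : ebar ≠ 0 := hebar_pos.ne'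
  -- the summand functions
  set g : ℕ → Ω → ℝ := fun t => Set.indicator {ω | T ω = t} (fun ω => Y t ω - c) with hg
  -- integrability
  have hintA : ∀ t, Integrable (Y t) (P[|A]) := fun t =>
    ((hYint t).restrict).smul_measure hPAinv
  have hgint : ∀ t, Integrable (g t) (P[|A]) := fun t =>
    (((hintA t).sub (integrable_const c)).indicator (hs t))
  -- pointwise identity
  have hpt : ∀ ω, (if T ω ≠ 0 then (1 : ℝ) else 0) * (Yobs ω - c)
      = ∑ t ∈ Finset.Icc 1 J, g t ω := by
    intro ω
    have hY : Yobs ω = Y (T ω) ω := by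
      rw [hYobs, Finset.sum_ite_eq]
      simp [Nat.lt_succ, hTle ω]
    simp only [hg, Set.indicator_apply, Set.mem_setOf_eq]
    by_cases h0 : T ω = 0
    · rw [Finset.sum_eq_zero]
      · simp [h0]
      · intro t ht
        rw [Finset.mem_Icc] at ht
        have : T ω ≠ t := by omega
        simp [this]
    · rw [Finset.sum_ite_eq]
      have : T ω ∈ Finset.Icc 1 J := Finset.mem_Icc.2 ⟨Nat.one_le_iff_ne_zero.2 h0, hTle ω⟩
      simp [this, h0, hY]
  -- each term integrates to e t * m t - e t * c
  have hterm : ∀ t ∈ Finset.Icc 1 J, ∫ ω, g t ω ∂(P[|A]) = e t * m t - e t * c := by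
    intro t ht
    rw [Finset.mem_Icc] at ht
    haveI : IsProbabilityMeasure (P[|(A ∩ {ω | T ω = t})]) :=
      cond_isProbabilityMeasure (hne t ht.2)
    have hintAs : Integrable (Y t) (P[|(A ∩ {ω | T ω = t})]) :=
      ((hYint t).restrict).smul_measure (ENNReal.inv_ne_top.2 (hne t ht.2))
    rw [hg, cond_integral_indicator P (hs t) (hne t ht.2),
      integral_sub hintAs (integrable_const c), integral_const]
    simp only [measure_univ, probReal_univ, ENNReal.toReal_one, one_smul, ← he t, ← hμbar t,
      hunconf t ht.1 ht.2]
    ring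
  -- main computation
  have key : ∀ ω, c + (if T ω ≠ 0 then (1 : ℝ) else 0) * (Yobs ω - c) / ebar
      = c + (∑ t ∈ Finset.Icc 1 J, g t ω) / ebar := by
    intro ω; rw [hpt ω]
  rw [integral_congr_ae (Filter.Eventually.of_forall key),
    integral_add (integrable_const c)
      ((integrable_finset_sum _ (fun t _ => hgint t)).div_const ebar),
    integral_const, integral_div, integral_finset_sum _ (fun t _ => hgint t),
    Finset.sum_congr rfl hterm]
  simp only [measure_univ, probReal_univ, ENNReal.toReal_one, one_smul]
  rw [Finset.sum_sub_distrib, ← Finset.sum_mul, ← hebar]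
  field_simp
  ring
end

section
/- Conditional unbiasedness of the rATE score: suppose unconfoundedness holds at every t ∈ {0,…,J}, let π_1,…,π_J be positive reals, and let c_0, c_1, …, c_J be arbitrary reals (outcome-model plug-ins). Then E[ Σ_{t=1}^J (π_t / Σ_{s=1}^J π_s)·( c_t + 1{T = t}·(Y − c_t)/e_t ) − ( c_0 + 1{T = 0}·(Y − c_0)/e_0 ) | A ] = Σ_{t=1}^J (π_t / Σ_{s=1}^J π_s)·(m_t − m_0). -/
open MeasureTheory ProbabilityTheory

/-- Conditional unbiasedness of the rATE score: for positive weights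
`π_1,…,π_J` and arbitrary outcome-model plug-ins `c_0,…,c_J`,
`E[Σ_{t=1}^J (π_t/Σπ)·(c_t + 1{T=t}(Y − c_t)/e_t) − (c_0 + 1{T=0}(Y − c_0)/e_0) | A]
 = Σ_{t=1}^J (π_t/Σπ)·(m_t − m_0)`, under unconfoundedness at every `t ∈ {0,…,J}`. -/
theorem rATE_score_conditionally_unbiased
    {Ω : Type*} [MeasurableSpace Ω] (P : Measure Ω) [IsProbabilityMeasure P]
    (J : ℕ) (hJ : 1 ≤ J)
    (T : Ω → ℕ) (hT : Measurable T) (hTle : ∀ ω, T ω ≤ J)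
    (Y : ℕ → Ω → ℝ) (hYmeas : ∀ t, Measurable (Y t)) (hYint : ∀ t, Integrable (Y t) P)
    (A : Set Ω) (hA : MeasurableSet A)
    (hpos : ∀ t ≤ J, 0 < P (A ∩ {ω | T ω = t}))
    (Yobs : Ω → ℝ)
    (hYobs : ∀ ω, Yobs ω = ∑ t ∈ Finset.range (J + 1), if T ω = t then Y t ω else 0)
    (e : ℕ → ℝ) (he : ∀ t, e t = ((P[|A]) {ω | T ω = t}).toReal)
    (m : ℕ → ℝ) (hm : ∀ t, m t = ∫ ω, Y t ω ∂(P[|A]))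
    (μbar : ℕ → ℝ)
    (hμbar : ∀ t, μbar t = ∫ ω, Y t ω ∂(P[|(A ∩ {ω | T ω = t})]))
    (hunconf : ∀ t ≤ J, μbar t = m t)
    (πv : ℕ → ℝ) (hπpos : ∀ t ∈ Finset.Icc 1 J, 0 < πv t)
    (c : ℕ → ℝ) :
    ∫ ω, ((∑ t ∈ Finset.Icc 1 J, (πv t / (∑ s ∈ Finset.Icc 1 J, πv s)) *
            (c t + (if T ω = t then (1 : ℝ) else 0) * (Yobs ω - c t) / e t))
          - (c 0 + (if T ω = 0 then (1 : ℝ) else 0) * (Yobs ω - c 0) / e 0)) ∂(P[|A])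
      = ∑ t ∈ Finset.Icc 1 J, (πv t / (∑ s ∈ Finset.Icc 1 J, πv s)) * (m t - m 0) := by
  -- basic positivity facts
  have hA0 : P A ≠ 0 := by
    have := hpos 0 (Nat.zero_le J)
    intro h
    exact absurd (le_trans (measure_mono (Set.inter_subset_left)) h.le)
      (by simpa [h] using this.ne')
  have hAfin : P A ≠ ⊤ := measure_ne_top P A
  have haPos : 0 < (P A).toReal := ENNReal.toReal_pos hA0 hAfin
  haveI : IsProbabilityMeasure (P[|A]) := cond_isProbabilityMeasure hA0
  have hTset : ∀ t : ℕ, MeasurableSet {ω | T ω = t} := fun t =>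
    hT (measurableSet_singleton t)
  have hbPos : ∀ t ≤ J, 0 < (P (A ∩ {ω | T ω = t})).toReal := fun t ht =>
    ENNReal.toReal_pos (hpos t ht).ne' (measure_ne_top _ _)
  -- e t value
  have heval : ∀ t ≤ J, e t = (P (A ∩ {ω | T ω = t})).toReal / (P A).toReal := by
    intro t ht
    rw [he t, cond_apply hA, ENNReal.toReal_mul, ENNReal.toReal_inv]
    ring
  have hePos : ∀ t ≤ J, 0 < e t := by
    intro t ht
    rw [heval t ht]
    exact div_pos (hbPos t ht) haPos
  -- pointwise identification of the score term with an indicator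
  have hpt : ∀ t ≤ J, ∀ ω,
      (if T ω = t then (1 : ℝ) else 0) * (Yobs ω - c t) / e t
        = ({ω | T ω = t}).indicator (fun ω => (Y t ω - c t) / e t) ω := by
    intro t ht ω
    by_cases h : T ω = t
    · subst h
      have hY : Yobs ω = Y (T ω) ω := by
        rw [hYobs ω, Finset.sum_ite_eq, if_pos (Finset.mem_range.2 (Nat.lt_succ_of_le (hTle ω)))]
      simp [Set.indicator_of_mem, hY]
    · simp [h, Set.indicator_of_notMem, Set.mem_setOf_eq]
  -- integrability of score terms
  have hint : ∀ t ≤ J, Integrable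
      (fun ω => (if T ω = t then (1 : ℝ) else 0) * (Yobs ω - c t) / e t) (P[|A]) := by
    intro t ht
    have h1 : Integrable (fun ω => (Y t ω - c t) / e t) P :=
      ((hYint t).sub (integrable_const _)).div_const _
    have h2 : Integrable (fun ω => (Y t ω - c t) / e t) (P[|A]) := by
      unfold ProbabilityTheory.cond
      exact (h1.restrict).smul_measure (by simp [hA0])
    have h3 := h2.indicator (hTset t)
    exact h3.congr (Filter.Eventually.of_forall fun ω => (hpt t ht ω).symm)
  -- key integral computation
  have key : ∀ t ≤ J,
      ∫ ω, (if T ω = t then (1 : ℝ) else 0) * (Yobs ω - c t) / e t ∂(P[|A]) = m t - c t := by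
    intro t ht
    have hrw : ∫ ω, (if T ω = t then (1 : ℝ) else 0) * (Yobs ω - c t) / e t ∂(P[|A])
        = ∫ ω in {ω | T ω = t}, (Y t ω - c t) / e t ∂(P[|A]) := by
      rw [← integral_indicator (hTset t)]
      exact integral_congr_ae (Filter.Eventually.of_forall (hpt t ht))
    have hcondset : ∀ (S : Set Ω), MeasurableSet S → ∀ (f : Ω → ℝ),
        ∫ ω in S, f ω ∂(P[|A]) = (P A)⁻¹.toReal * ∫ ω in S ∩ A, f ω ∂P := by
      intro S hS f
      unfold ProbabilityTheory.cond
      rw [Measure.restrict_smul, Measure.restrict_restrict hS, integral_smul_measure]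
      simp
    rw [hrw, hcondset _ (hTset t)]
    have hScomm : {ω | T ω = t} ∩ A = A ∩ {ω | T ω = t} := Set.inter_comm _ _
    rw [hScomm]
    -- split the set integral
    have hsub : ∫ ω in A ∩ {ω | T ω = t}, (Y t ω - c t) / e t ∂P
        = (∫ ω in A ∩ {ω | T ω = t}, Y t ω ∂P - (P (A ∩ {ω | T ω = t})).toReal * c t) / e t := by
      rw [integral_div, integral_sub ((hYint t).restrict) (integrable_const _),
        setIntegral_const, smul_eq_mul]
      rfl
    rw [hsub]
    -- μbar value
    have hμ : μbar t = (P (A ∩ {ω | T ω = t}))⁻¹.toReal * ∫ ω in A ∩ {ω | T ω = t}, Y t ω ∂P := by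
      rw [hμbar t]
      unfold ProbabilityTheory.cond
      rw [integral_smul_measure]; simp
    have hb := (hbPos t ht).ne'
    have ha := haPos.ne'
    have hI : ∫ ω in A ∩ {ω | T ω = t}, Y t ω ∂P = μbar t * (P (A ∩ {ω | T ω = t})).toReal := by
      rw [hμ, ENNReal.toReal_inv]
      field_simp
    rw [hI, ← hunconf t ht, heval t ht, ENNReal.toReal_inv]
    set a := (P A).toReal
    set b := (P (A ∩ {ω | T ω = t})).toReal
    field_simp
  -- integrability of the weighted terms
  set w : ℕ → ℝ := fun t => πv t / (∑ s ∈ Finset.Icc 1 J, πv s) with hw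
  have hint' : ∀ t ∈ Finset.Icc 1 J, Integrable
      (fun ω => w t * (c t + (if T ω = t then (1 : ℝ) else 0) * (Yobs ω - c t) / e t)) (P[|A]) := by
    intro t ht
    exact (((integrable_const (c t)).add (hint t (Finset.mem_Icc.1 ht).2)).const_mul _)
  have hint0 : Integrable
      (fun ω => c 0 + (if T ω = 0 then (1 : ℝ) else 0) * (Yobs ω - c 0) / e 0) (P[|A]) :=
    (integrable_const _).add (hint 0 (Nat.zero_le J))
  rw [integral_sub (integrable_finset_sum _ hint') hint0,
    integral_finset_sum _ hint']
  have hterm : ∀ t ∈ Finset.Icc 1 J,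
      ∫ ω, w t * (c t + (if T ω = t then (1 : ℝ) else 0) * (Yobs ω - c t) / e t) ∂(P[|A])
        = w t * m t := by
    intro t ht
    rw [integral_const_mul, integral_add (integrable_const _) (hint t (Finset.mem_Icc.1 ht).2),
      integral_const, key t (Finset.mem_Icc.1 ht).2]
    simp
  rw [Finset.sum_congr rfl hterm,
    integral_add (integrable_const _) (hint 0 (Nat.zero_le J)),
    integral_const, key 0 (Nat.zero_le J)]
  simp only [probReal_univ, measure_univ, ENNReal.toReal_one, one_smul]
  have hwsum : ∑ t ∈ Finset.Icc 1 J, w t = 1 := by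
    rw [hw, ← Finset.sum_div]
    apply div_self
    have : 0 < ∑ s ∈ Finset.Icc 1 J, πv s :=
      Finset.sum_pos hπpos ⟨1, by simp [Finset.mem_Icc, hJ]⟩
    exact this.ne'
  simp only [mul_sub]
  rw [Finset.sum_sub_distrib, ← Finset.sum_mul, hwsum, one_mul]
  ring
end

section
/- Neyman orthogonality of the AIPW score (path-wise derivative form): let e, μ, a, b be real numbers with e ≠ 0, and define f : ℝ → ℝ by f(r) = (μ + r·a) + e·μ/(e + r·b) − e·(μ + r·a)/(e + r·b). Then f is differentiable at 0 with derivative f′(0) = 0. -/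
/-- Neyman orthogonality of the AIPW score (path-wise derivative form):
the perturbed-nuisance conditional expectation `f(r)` has derivative `0` at `r = 0`. -/
theorem aipw_score_neyman_orthogonal
    (e μ a b : ℝ) (he : e ≠ 0) :
    HasDerivAt (fun r : ℝ =>
      (μ + r * a) + e * μ / (e + r * b) - e * (μ + r * a) / (e + r * b)) 0 0 := by
  have hd : HasDerivAt (fun r : ℝ => e + r * b) b 0 := by
    simpa using (hasDerivAt_id (0:ℝ)).mul_const b |>.const_add e
  have hden : (e + 0 * b) ≠ 0 := by simpa using he
  have h1 : HasDerivAt (fun r : ℝ => μ + r * a) a 0 := by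
    simpa using (hasDerivAt_id (0:ℝ)).mul_const a |>.const_add μ
  have h2 : HasDerivAt (fun r : ℝ => e * μ / (e + r * b))
      ((0 * (e + 0 * b) - e * μ * b) / (e + 0 * b) ^ 2) 0 :=
    (hasDerivAt_const (0:ℝ) (e*μ)).div hd hden
  have h3 : HasDerivAt (fun r : ℝ => e * (μ + r * a) / (e + r * b))
      ((e * a * (e + 0 * b) - e * (μ + 0 * a) * b) / (e + 0 * b) ^ 2) 0 :=
    ((h1.const_mul e).div hd hden)
  have := (h1.add h2).sub h3
  convert this using 1
  · rfl
  · rfl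
  · rfl
  field_simp
  ring
end

section
/- Neyman orthogonality of the nATE score (path-wise derivative form): let S be a nonempty finite index set and let μ, e, a, b : S → ℝ with Σ_{t∈S} e_t ≠ 0. Define f : ℝ → ℝ by f(r) = [ Σ_{t∈S} (μ_t + r·a_t)(e_t + r·b_t) ] / [ Σ_{t∈S} (e_t + r·b_t) ] + [ Σ_{t∈S} e_t·μ_t ] / [ Σ_{t∈S} (e_t + r·b_t) ] − [ Σ_{t∈S} e_t ]·[ Σ_{t∈S} (μ_t + r·a_t)(e_t + r·b_t) ] / [ Σ_{t∈S} (e_t + r·b_t) ]². Then f is differentiable at 0 with derivative f′(0) = 0. -/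
/-- Neyman orthogonality of the nATE score (path-wise derivative form):
the perturbed-nuisance conditional expectation `f(r)` has derivative `0` at `r = 0`. -/
theorem nATE_score_neyman_orthogonal
    {S : Type*} [Fintype S] [Nonempty S]
    (μ e a b : S → ℝ) (he : (∑ t, e t) ≠ 0) :
    HasDerivAt (fun r : ℝ =>
      (∑ t, (μ t + r * a t) * (e t + r * b t)) / (∑ t, (e t + r * b t))
        + (∑ t, e t * μ t) / (∑ t, (e t + r * b t))
        - (∑ t, e t) * (∑ t, (μ t + r * a t) * (e t + r * b t))
            / (∑ t, (e t + r * b t)) ^ 2) 0 0 := by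
  have hD : HasDerivAt (fun r : ℝ => ∑ t, (e t + r * b t)) (∑ t, b t) 0 := by
    apply HasDerivAt.fun_sum
    intro t _
    simpa using ((hasDerivAt_id (0:ℝ)).mul_const (b t)).const_add (e t)
  have hN : HasDerivAt (fun r : ℝ => ∑ t, (μ t + r * a t) * (e t + r * b t))
      (∑ t, (a t * e t + μ t * b t)) 0 := by
    apply HasDerivAt.fun_sum
    intro t _
    have h1 : HasDerivAt (fun r : ℝ => μ t + r * a t) (a t) 0 := by
      simpa using ((hasDerivAt_id (0:ℝ)).mul_const (a t)).const_add (μ t)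
    have h2 : HasDerivAt (fun r : ℝ => e t + r * b t) (b t) 0 := by
      simpa using ((hasDerivAt_id (0:ℝ)).mul_const (b t)).const_add (e t)
    have := h1.fun_mul h2
    exact this.congr_deriv (by simp)
  have hE0 : (fun r : ℝ => ∑ t, (e t + r * b t)) 0 ≠ 0 := by simpa using he
  have h1 := hN.fun_div hD hE0
  have h2 := (hasDerivAt_const (0:ℝ) (∑ t, e t * μ t)).fun_div hD hE0
  have h3 := ((hasDerivAt_const (0:ℝ) (∑ t, e t)).fun_mul hN).fun_div (hD.fun_pow 2)
    (by simpa using pow_ne_zero 2 hE0)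
  have h := (h1.fun_add h2).fun_sub h3
  refine h.congr_deriv ?_
  have hswap : (∑ t, e t * μ t) = ∑ t, μ t * e t := by
    exact Finset.sum_congr rfl fun t _ => mul_comm _ _
  simp only [zero_mul, add_zero, mul_one, hswap]
  field_simp
  ring
end

section
/- Neyman orthogonality of weighted combinations of AIPW scores (covering the rATE and Δ scores): let S be a nonempty finite index set and let w, μ, e, a, b : S → ℝ with e_t ≠ 0 for all t ∈ S. Define f : ℝ → ℝ by f(r) = Σ_{t∈S} w_t·[ (μ_t + r·a_t) + e_t·μ_t/(e_t + r·b_t) − e_t·(μ_t + r·a_t)/(e_t + r·b_t) ]. Then f is differentiable at 0 with derivative f′(0) = 0. -/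
/-- Neyman orthogonality of weighted combinations of AIPW scores
(covering the rATE and Δ scores): the perturbed-nuisance conditional expectation
`f(r)` has derivative `0` at `r = 0`. -/
theorem weighted_aipw_scores_neyman_orthogonal
    {S : Type*} [Fintype S] [Nonempty S]
    (w μ e a b : S → ℝ) (he : ∀ t, e t ≠ 0) :
    HasDerivAt (fun r : ℝ =>
      ∑ t, w t * ((μ t + r * a t) + e t * μ t / (e t + r * b t)
        - e t * (μ t + r * a t) / (e t + r * b t))) 0 0 := by
  have key : ∀ t : S, HasDerivAt (fun r : ℝ =>
      w t * ((μ t + r * a t) + e t * μ t / (e t + r * b t)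
        - e t * (μ t + r * a t) / (e t + r * b t))) 0 0 := by
    intro t
    have hden : HasDerivAt (fun r : ℝ => e t + r * b t) (b t) 0 := by
      simpa using (hasDerivAt_const (0:ℝ) (e t)).fun_add ((hasDerivAt_id (0:ℝ)).mul_const (b t))
    have hden0 : (e t + (0:ℝ) * b t) ≠ 0 := by simpa using he t
    have hnum1 : HasDerivAt (fun r : ℝ => μ t + r * a t) (a t) 0 := by
      simpa using (hasDerivAt_const (0:ℝ) (μ t)).fun_add ((hasDerivAt_id (0:ℝ)).mul_const (a t))
    have h2 : HasDerivAt (fun r : ℝ => e t * μ t / (e t + r * b t))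
        ((0 * (e t + 0 * b t) - e t * μ t * b t) / (e t + 0 * b t)^2) 0 :=
      (hasDerivAt_const (0:ℝ) (e t * μ t)).div hden hden0
    have hnum3 : HasDerivAt (fun r : ℝ => e t * (μ t + r * a t)) (e t * a t) 0 := by
      simpa using hnum1.const_mul (e t)
    have h3 : HasDerivAt (fun r : ℝ => e t * (μ t + r * a t) / (e t + r * b t))
        ((e t * a t * (e t + 0 * b t) - e t * (μ t + 0 * a t) * b t) / (e t + 0 * b t)^2) 0 :=
      hnum3.div hden hden0
    have h := ((hnum1.fun_add h2).fun_sub h3).const_mul (w t)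
    refine h.congr_deriv ?_
    symm
    rw [show (0:ℝ) = w t * 0 by ring]
    congr 1
    have het := he t
    simp only [mul_zero, zero_mul, add_zero, zero_sub]
    field_simp
    ring
  have h := HasDerivAt.fun_sum (fun t (_ : t ∈ Finset.univ) => key t)
  simpa using h
end
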